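/- arXiv:2506.21505 — 2 statements merged into one kernel-verified Lean document; each statement's English description precedes it below -/
import Mathlib

section
/- Let k be a field and B the exterior algebra on a 3-dimensional space with basis x₁,x₂,x₃. For k ≥ 1 define β_k as the b_{k-1} × b_k matrix (b_j = C(j+2,2)) indexed by nondecreasing words of lengths k-1 and k in {1,2,3}, with entry x_u in position (v₁…v_{k-1}, [v₁…v_{k-1}u]) and 0 elsewhere; define β'_{k+1} as the b_k × b_{k-1} matrix with entry x_{u'} ∧ x_{u''} in position ([v₁…v_{k-1}u], v₁…v_{k-1}) (where {u',u''} = {1,2,3}\{u}, u'<u''). Then β_k β'_{k+1} = (x₁∧x₂∧x₃) · I_{b_{k-1}} as matrices over B. -/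
/-- The matrix identity `β_k β'_{k+1} = (x₁∧x₂∧x₃) · I` over the exterior algebra
`B = Λ(k³)`.  Nondecreasing words of length `k` in `{1,2,3}` are identified with
multisets of size `k`, i.e. with elements of `Sym (Fin 3) k`; the word `[v₁…v_{k-1}u]`
is the multiset `u ::ₛ v`.  Here `m = k - 1`, `β` is `β_k` and `β'` is `β'_{k+1}`. -/
theorem stmt_10 (K : Type*) [Field K] (V : Type*) [AddCommGroup V] [Module K V]
    (b : Module.Basis (Fin 3) K V) (m : ℕ)
    (z : Fin 3 → ExteriorAlgebra K V) (hz : ∀ i, z i = ExteriorAlgebra.ι K (b i))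
    -- for `a ∈ {1,2,3}`, `compl a = (a', a'')` is `{1,2,3} \ {a}` with `a' < a''`
    (compl : Fin 3 → Fin 3 × Fin 3) (hcompl : compl = ![(1, 2), (0, 2), (0, 1)])
    (β : Matrix (Sym (Fin 3) m) (Sym (Fin 3) (m + 1)) (ExteriorAlgebra K V))
    (hβ : ∀ v u, β v u = ∑ a : Fin 3, if u = a ::ₛ v then z a else 0)
    (β' : Matrix (Sym (Fin 3) (m + 1)) (Sym (Fin 3) m) (ExteriorAlgebra K V))
    (hβ' : ∀ w v, β' w v =
      ∑ a : Fin 3, if w = a ::ₛ v then z (compl a).1 * z (compl a).2 else 0) :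
    β * β' = Matrix.diagonal (fun _ => z 0 * z 1 * z 2) := by
  have hsq : ∀ i : Fin 3, z i * z i = 0 := by
    intro i; rw [hz]; exact ExteriorAlgebra.ι_sq_zero _
  have hswap : ∀ i j : Fin 3, z i * z j = -(z j * z i) := by
    intro i j
    rw [hz, hz, eq_neg_iff_add_eq_zero]
    exact ExteriorAlgebra.ι_add_mul_swap _ _
  have hxx : ∀ i j : Fin 3, z i * (z i * z j) = 0 := by
    intro i j; rw [← mul_assoc, hsq, zero_mul]
  have hxyx : ∀ i j : Fin 3, z i * (z j * z i) = 0 := by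
    intro i j
    rw [← mul_assoc, hswap i j, neg_mul, mul_assoc, hsq, mul_zero, neg_zero]
  have hzero : ∀ a c : Fin 3, a ≠ c →
      z a * (z (compl c).1 * z (compl c).2) = 0 := by
    subst hcompl
    intro a c hac
    fin_cases a <;> fin_cases c <;>
      simp only [Matrix.cons_val_zero, Matrix.cons_val_one, Matrix.cons_val_two, Matrix.cons_val_succ,
        Matrix.head_cons, Matrix.vecTail, Matrix.vecHead, Function.comp] <;>
      first
        | exact absurd rfl hac
        | exact hxx _ _
        | exact hxyx _ _
  ext v v'
  rw [Matrix.mul_apply]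
  simp only [hβ, hβ', Finset.sum_mul, Finset.mul_sum, ite_mul, mul_ite, zero_mul, mul_zero]
  rw [Finset.sum_comm]
  simp only [Finset.sum_ite_eq' Finset.univ, Finset.mem_univ, if_true]
  by_cases hv : v = v'
  · subst hv
    rw [Matrix.diagonal_apply_eq]
    simp only [Sym.cons_inj_left, Finset.sum_ite_eq, Finset.mem_univ, if_true]
    subst hcompl
    rw [Fin.sum_univ_three]
    simp only [Matrix.cons_val_zero, Matrix.cons_val_one, Matrix.cons_val_two, Matrix.cons_val_succ,
      Matrix.head_cons, Matrix.vecTail, Matrix.vecHead, Function.comp]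
    have h1 : z 1 * (z 0 * z 2) = -(z 0 * (z 1 * z 2)) := by
      rw [← mul_assoc, hswap 1 0, neg_mul, mul_assoc]
    have h2 : z 2 * (z 0 * z 1) = z 0 * (z 1 * z 2) := by
      rw [← mul_assoc, hswap 2 0, neg_mul, mul_assoc, hswap 2 1, mul_neg, neg_neg]
    rw [h1, h2, mul_assoc]
    abel
  · rw [Matrix.diagonal_apply_ne _ hv]
    refine Finset.sum_eq_zero fun c _ => Finset.sum_eq_zero fun a _ => ?_
    by_cases hac : a = c
    · subst hac
      rw [if_neg]
      intro h
      exact hv ((Sym.cons_inj_right _ _ _).mp h).symm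
    · rw [hzero a c hac, ite_self]
end

section
/- Let a₁, a₂, a₃ be integers. Define power series over ℚ: D(t) = (1-t)³ - t(a₁-3), f(t) = 1/D(t), g(t) = (t² + t(a₂-3))/D(t), h(t) = t·a₃/D(t), and L(t,z) = f(tz) + z·g(tz) + z²·h(tz) (as a power series in t with coefficients polynomials in z). Then f(tz)/(1 - z·g(tz) - z²·h(tz)) = 1/(1 - a₁tz - (a₂-3)tz² + 3t²z² - a₃tz³ - t²z³ - t³z³). -/
/-- The algebraic core of the Poincaré series computation for class T:
`f(tz)/(1 - z·g(tz) - z²·h(tz)) = 1/(1 - a₁tz - (a₂-3)tz² + 3t²z² - a₃tz³ - t²z³ - t³z³)`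
in `ℚ[[t,z]]`, where `D(t) = (1-t)³ - t(a₁-3)`, `f = 1/D`, `g = (t² + t(a₂-3))/D`,
`h = t·a₃/D`. -/
theorem stmt_12 (a₁ a₂ a₃ : ℤ)
    (t z D f g h : MvPowerSeries (Fin 2) ℚ)
    (ht : t = MvPowerSeries.X 0) (hz : z = MvPowerSeries.X 1)
    (hD : D = (1 - t * z) ^ 3 - t * z * (MvPowerSeries.C : ℚ →+* MvPowerSeries (Fin 2) ℚ) ((a₁ : ℚ) - 3))
    (hf : f = D⁻¹)
    (hg : g = (t ^ 2 * z ^ 2 + t * z * (MvPowerSeries.C : ℚ →+* MvPowerSeries (Fin 2) ℚ) ((a₂ : ℚ) - 3)) * D⁻¹)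
    (hh : h = t * z * (MvPowerSeries.C : ℚ →+* MvPowerSeries (Fin 2) ℚ) (a₃ : ℚ) * D⁻¹) :
    f * (1 - z * g - z ^ 2 * h)⁻¹ =
      (1 - (MvPowerSeries.C : ℚ →+* MvPowerSeries (Fin 2) ℚ) (a₁ : ℚ) * t * z
         - (MvPowerSeries.C : ℚ →+* MvPowerSeries (Fin 2) ℚ) ((a₂ : ℚ) - 3) * t * z ^ 2
         + 3 * t ^ 2 * z ^ 2
         - (MvPowerSeries.C : ℚ →+* MvPowerSeries (Fin 2) ℚ) (a₃ : ℚ) * t * z ^ 3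
         - t ^ 2 * z ^ 3 - t ^ 3 * z ^ 3)⁻¹ := by
  have hDc : MvPowerSeries.constantCoeff D ≠ 0 := by
    simp [hD, ht, hz]
  have hDinv : D⁻¹ * D = 1 := MvPowerSeries.inv_mul_cancel D hDc
  set E := 1 - z * g - z ^ 2 * h with hE
  have hEc : MvPowerSeries.constantCoeff E ≠ 0 := by
    simp [hE, hg, hh, hz]
  have hEinv : E⁻¹ * E = 1 := MvPowerSeries.inv_mul_cancel E hEc
  have hgD : g * D = t ^ 2 * z ^ 2 + t * z * (MvPowerSeries.C : ℚ →+* MvPowerSeries (Fin 2) ℚ) ((a₂ : ℚ) - 3) := by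
    rw [hg, mul_assoc, hDinv, mul_one]
  have hhD : h * D = t * z * (MvPowerSeries.C : ℚ →+* MvPowerSeries (Fin 2) ℚ) (a₃ : ℚ) := by
    rw [hh, mul_assoc, hDinv, mul_one]
  have hP : D * E =
      1 - (MvPowerSeries.C : ℚ →+* MvPowerSeries (Fin 2) ℚ) (a₁ : ℚ) * t * z
        - (MvPowerSeries.C : ℚ →+* MvPowerSeries (Fin 2) ℚ) ((a₂ : ℚ) - 3) * t * z ^ 2
        + 3 * t ^ 2 * z ^ 2
        - (MvPowerSeries.C : ℚ →+* MvPowerSeries (Fin 2) ℚ) (a₃ : ℚ) * t * z ^ 3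
        - t ^ 2 * z ^ 3 - t ^ 3 * z ^ 3 := by
    have : D * E = D - z * (g * D) - z ^ 2 * (h * D) := by ring
    rw [this, hgD, hhD, hD]
    simp only [map_sub, map_one]
    have h3 : (MvPowerSeries.C : ℚ →+* MvPowerSeries (Fin 2) ℚ) (3 : ℚ) = 3 := by
      exact map_ofNat _ 3
    rw [h3]
    ring
  have hPc : MvPowerSeries.constantCoeff (D * E) ≠ 0 := by
    rw [map_mul]
    exact mul_ne_zero hDc hEc
  rw [← hP, MvPowerSeries.eq_inv_iff_mul_eq_one hPc, hf]
  calc D⁻¹ * E⁻¹ * (D * E) = (D⁻¹ * D) * (E⁻¹ * E) := by ring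
  _ = 1 := by rw [hDinv, hEinv, one_mul]
end
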